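/- Let X be an infinite set, f : X → X surjective, and x ∈ X with T_∞(f,x) infinite. Then for any finite collection y₁, …, y_N ∈ T_∞(f,x), there exists x₀ ∈ T_∞(f,x) such that none of the yᵢ lies in T_∞(f,x₀). -/
import Mathlib


/-- Let `X` be an infinite set, `f : X → X` surjective, and `x ∈ X` with the
iterated preimage set `T_∞(f,x) = ⋃ₙ f⁻ⁿ(x)` infinite. Then for any finite collection
`y₁, …, y_N ∈ T_∞(f,x)` there exists `x₀ ∈ T_∞(f,x)` such that no `yᵢ` lies in `T_∞(f,x₀)`. -/
theorem stmt_1 {X : Type*} [Infinite X] (f : X → X) (hf : Function.Surjective f)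
    (x : X) (hT : {z : X | ∃ n : ℕ, f^[n] z = x}.Infinite)
    (Y : Finset X) (hY : (Y : Set X) ⊆ {z : X | ∃ n : ℕ, f^[n] z = x}) :
    ∃ x₀ ∈ {z : X | ∃ n : ℕ, f^[n] z = x},
      ∀ y ∈ Y, y ∉ {z : X | ∃ n : ℕ, f^[n] z = x₀} := by
  classical
  set T : Set X := {z : X | ∃ n : ℕ, f^[n] z = x} with hTdef
  have horb : ∀ y ∈ Y, (T ∩ Set.range fun k : ℕ => f^[k] y).Finite := by
    intro y hy
    obtain ⟨n, hn⟩ := hY hy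
    by_cases hp : ∃ p > 0, f^[p] x = x
    · obtain ⟨p, hp0, hpx⟩ := hp
      apply Set.Finite.subset (Set.finite_range (fun k : Fin (n + p) => f^[(k : ℕ)] y))
      rintro z ⟨-, ⟨k, rfl⟩⟩
      by_cases hk : k < n + p
      · exact ⟨⟨k, hk⟩, rfl⟩
      · push_neg at hk
        have hkn : n ≤ k := le_trans (Nat.le_add_right n p) hk
        obtain ⟨j, rfl⟩ := Nat.exists_eq_add_of_le hkn
        have hper : Function.IsPeriodicPt f p x := hpx
        have h1 : f^[n + j] y = f^[j] x := by
          rw [Nat.add_comm, Function.iterate_add_apply, hn]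
        have h2 : f^[j % p] x = f^[j] x := hper.iterate_mod_apply j
        refine ⟨⟨n + j % p, Nat.add_lt_add_left (Nat.mod_lt _ hp0) n⟩, ?_⟩
        show f^[n + j % p] y = f^[n + j] y
        rw [h1, ← h2, Nat.add_comm, Function.iterate_add_apply, hn]
    · apply Set.Finite.subset (Set.finite_range (fun k : Fin (n + 1) => f^[(k : ℕ)] y))
      rintro z ⟨⟨m, hm⟩, ⟨k, rfl⟩⟩
      by_cases hk : k < n + 1
      · exact ⟨⟨k, hk⟩, rfl⟩
      · exfalso
        push_neg at hk
        have hkn : n ≤ k := by omega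
        obtain ⟨j, rfl⟩ := Nat.exists_eq_add_of_le hkn
        have hj : 0 < j := by omega
        have h1 : f^[n + j] y = f^[j] x := by
          rw [Nat.add_comm, Function.iterate_add_apply, hn]
        have hxper : f^[m + j] x = x := by
          rw [Function.iterate_add_apply, ← h1, hm]
        exact hp ⟨m + j, by omega, hxper⟩
  have hB : (T ∩ ⋃ y ∈ Y, Set.range fun k : ℕ => f^[k] y).Finite := by
    rw [Set.inter_iUnion₂]
    exact Set.Finite.biUnion Y.finite_toSet horb
  obtain ⟨x₀, hx₀⟩ := (hT.diff hB).nonempty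
  refine ⟨x₀, hx₀.1, ?_⟩
  intro y hy hmem
  obtain ⟨k, hk⟩ := hmem
  exact hx₀.2 ⟨hx₀.1, Set.mem_biUnion hy ⟨k, hk⟩⟩
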